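/- There exists a simple graph G on ℕ such that the ordered graph (ℕ, G, ≤) is symmetrically indivisible, while the graph G itself is not symmetrically indivisible. (This answers negatively the question whether a reduct of a symmetrically indivisible structure to a sublanguage is necessarily symmetrically indivisible.) -/

import Mathlib

/-- A graph embedding `e : G ↪g H` is symmetric if every automorphism of `G`
pushes forward along `e` to an automorphism of `H`. -/
def IsSymmetricGraphEmb {α β : Type*} {G : SimpleGraph α} {H : SimpleGraph β}
    (e : G ↪g H) : Prop :=
  ∀ g : G ≃g G, ∃ g' : H ≃g H, ∀ x, g' (e x) = e (g x)

/-- A graph is symmetrically indivisible if every 2-coloring admits a monochromatic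
symmetric self-embedding. -/
def SymIndivGraph {α : Type*} (G : SimpleGraph α) : Prop :=
  ∀ c : α → Bool, ∃ e : G ↪g G, IsSymmetricGraphEmb e ∧ ∀ x y, c (e x) = c (e y)

set_option linter.dupNamespace false

namespace SymIndivAux


/-- Block index of a natural number. Blocks are the intervals
`[m*m, m*m+m)` (index `2*m-1`, size `m`, for `m ≥ 1`) and
`[m*m+m, (m+1)*(m+1))` (index `2*m`, size `m+1`). -/
def BB (n : ℕ) : ℕ :=
  if n < Nat.sqrt n * Nat.sqrt n + Nat.sqrt n then 2 * Nat.sqrt n - 1 else 2 * Nat.sqrt n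

/-- Size of block `k`. -/
def LL (k : ℕ) : ℕ := k / 2 + 1

/-- Start of block `k`. -/
def lo (k : ℕ) : ℕ := if k % 2 = 0 then (k/2) * (k/2) + k/2 else ((k+1)/2) * ((k+1)/2)

lemma LL_pos (k : ℕ) : 0 < LL k := Nat.succ_pos _

lemma lo_succ (k : ℕ) : lo (k+1) = lo k + LL k := by
  rcases Nat.even_or_odd k with ⟨q, hq⟩ | ⟨q, hq⟩
  · subst hq
    have h1 : (q + q + 1) % 2 = 1 := by omega
    have h2 : (q + q) % 2 = 0 := by omega
    have h3 : (q + q + 1 + 1) / 2 = q + 1 := by omega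
    have h4 : (q + q) / 2 = q := by omega
    simp only [lo, LL, h1, h2, h3, h4]
    norm_num
    have : (q+1) * (q+1) = q * q + q + (q + 1) := by ring
    omega
  · subst hq
    have h1 : (2*q + 1) % 2 = 1 := by omega
    have h2 : (2*q + 1 + 1) % 2 = 0 := by omega
    have h3 : (2*q + 1 + 1) / 2 = q + 1 := by omega
    have h4 : (2*q + 1) / 2 = q := by omega
    simp only [lo, LL, h1, h2, h3, h4]
    norm_num

lemma BB_mem (n : ℕ) : lo (BB n) ≤ n ∧ n < lo (BB n) + LL (BB n) := by
  have hm1 : Nat.sqrt n * Nat.sqrt n ≤ n := by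
    have := Nat.sqrt_le' n; nlinarith [this]
  have hm2 : n < (Nat.sqrt n + 1) * (Nat.sqrt n + 1) := Nat.lt_succ_sqrt n
  set m := Nat.sqrt n with hm
  by_cases h : n < m * m + m
  · have hm0 : 1 ≤ m := by nlinarith
    have hB : BB n = 2 * m - 1 := by simp [BB, ← hm, h]
    have hodd : (2 * m - 1) % 2 = 1 := by omega
    have hdiv : (2 * m - 1 + 1) / 2 = m := by omega
    have hdiv2 : (2 * m - 1) / 2 = m - 1 := by omega
    have hlo : lo (2*m-1) = m * m := by
      simp only [lo, if_neg (by omega : ¬ (2*m-1) % 2 = 0), hdiv]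
    have hLL : LL (2*m-1) = m := by
      simp only [LL, hdiv2]; omega
    rw [hB, hlo, hLL]
    omega
  · have hB : BB n = 2 * m := by simp [BB, ← hm, h]
    have heven : (2 * m) % 2 = 0 := by omega
    have hdiv : (2 * m) / 2 = m := by omega
    have hlo : lo (2*m) = m * m + m := by
      simp only [lo, if_pos heven, hdiv]
    have hLL : LL (2*m) = m + 1 := by
      simp only [LL, hdiv]
    rw [hB, hlo, hLL]
    constructor
    · omega
    · nlinarith

lemma BB_eq_of_mem {k n : ℕ} (h1 : lo k ≤ n) (h2 : n < lo k + LL k) : BB n = k := by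
  have hsq : ∀ a b : ℕ, a * a ≤ b → b < (a+1)*(a+1) → Nat.sqrt b = a := by
    intro a b hab hba
    have h1 : a ≤ Nat.sqrt b := Nat.le_sqrt.mpr hab
    have h2 : Nat.sqrt b < a + 1 := Nat.sqrt_lt.mpr hba
    omega
  rcases Nat.even_or_odd k with ⟨q, hq⟩ | ⟨q, hq⟩
  · -- k = 2q, block [q*q+q, (q+1)*(q+1))
    have hk : k = 2 * q := by omega
    subst hk
    have hd : (2*q) / 2 = q := by omega
    have hlo : lo (2*q) = q*q + q := by
      simp only [lo, if_pos (by omega : (2*q) % 2 = 0), hd]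
    have hL : LL (2*q) = q + 1 := by simp only [LL]; omega
    rw [hlo] at h1; rw [hlo, hL] at h2
    have hs : Nat.sqrt n = q := hsq q n (by omega) (by nlinarith)
    simp [BB, hs, if_neg (by omega : ¬ n < q * q + q)]
  · -- k = 2q+1, block [(q+1)*(q+1), (q+1)*(q+1)+(q+1))
    have hd : (2*q+1+1) / 2 = q+1 := by omega
    have hlo : lo (2*q+1) = (q+1)*(q+1) := by
      simp only [lo, if_neg (by omega : ¬ (2*q+1) % 2 = 0), hd]
    have hL : LL (2*q+1) = q + 1 := by simp only [LL]; omega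
    subst hq
    rw [hlo] at h1; rw [hlo, hL] at h2
    have hs : Nat.sqrt n = q + 1 := hsq (q+1) n h1 (by nlinarith)
    have : n < (q+1) * (q+1) + (q+1) := by omega
    simp only [BB, hs, if_pos this]
    omega

lemma BB_monotone : Monotone BB := by
  apply monotone_nat_of_le_succ
  intro n
  obtain ⟨h1, h2⟩ := BB_mem n
  by_cases h : n + 1 < lo (BB n) + LL (BB n)
  · have : BB (n+1) = BB n := BB_eq_of_mem (by omega) h
    omega
  · have heq : n + 1 = lo (BB n + 1) := by rw [lo_succ]; omega
    have : BB (n+1) = BB n + 1 := by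
      apply BB_eq_of_mem
      · omega
      · have := LL_pos (BB n + 1); omega
    omega

lemma BB_lt_of_lt {a b : ℕ} (h : BB a < BB b) : a < b := by
  by_contra hab
  exact absurd (BB_monotone (by omega : b ≤ a)) (by omega)

lemma mem_block_iff (v n : ℕ) : BB n = BB v ↔ lo (BB v) ≤ n ∧ n < lo (BB v) + LL (BB v) := by
  constructor
  · intro h; rw [← h]; exact BB_mem n
  · intro ⟨h1, h2⟩; exact BB_eq_of_mem h1 h2

lemma BB0 : BB 0 = 0 := by decide
lemma BB1 : BB 1 = 1 := by decide


/-- The graph: `n` and `m` are adjacent iff distinct and in the same block. -/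
def GG : SimpleGraph ℕ where
  Adj n m := n ≠ m ∧ BB n = BB m
  symm := ⟨by intro n m ⟨h1, h2⟩; exact ⟨h1.symm, h2.symm⟩⟩
  loopless := ⟨by intro n ⟨h1, _⟩; exact h1 rfl⟩

lemma GG_adj (n m : ℕ) : GG.Adj n m ↔ n ≠ m ∧ BB n = BB m := Iff.rfl

/-- The (bad) coloring: parity of the block index. -/
def cc (n : ℕ) : Bool := decide (BB n % 2 = 0)

/-- same color + different blocks implies different block sizes. -/
lemma LL_ne {u v : ℕ} (hc : cc u = cc v) (hb : BB u ≠ BB v) : LL (BB u) ≠ LL (BB v) := by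
  have hpar : BB u % 2 = BB v % 2 := by
    simp only [cc, decide_eq_decide] at hc
    omega
  simp only [LL]
  omega

/-- vertices 0 and 1 are isolated in GG. -/
lemma GG_isolated {u v : ℕ} (hv : v = 0 ∨ v = 1) : ¬ GG.Adj u v := by
  rintro ⟨h1, h2⟩
  obtain ⟨m1, m2⟩ := BB_mem u
  rcases hv with rfl | rfl
  · rw [BB0] at h2
    rw [h2] at m1 m2
    have : lo 0 = 0 := by decide
    have : LL 0 = 1 := by decide
    omega
  · rw [BB1] at h2
    rw [h2] at m1 m2
    have : lo 1 = 1 := by decide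
    have : LL 1 = 1 := by decide
    omega

/-- The swap of 0 and 1 is an automorphism of GG. -/
def swapAut : GG ≃g GG where
  toEquiv := Equiv.swap 0 1
  map_rel_iff' := by
    intro a b
    constructor
    · intro h
      by_cases ha : a = 0 ∨ a = 1
      · exact absurd (GG.adj_symm h) (by
          rcases ha with rfl | rfl
          · rw [Equiv.swap_apply_left]; exact GG_isolated (Or.inr rfl)
          · rw [Equiv.swap_apply_right]; exact GG_isolated (Or.inl rfl))
      · by_cases hb : b = 0 ∨ b = 1
        · exact absurd h (by
            rcases hb with rfl | rfl
            · rw [Equiv.swap_apply_left]; exact GG_isolated (Or.inr rfl)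
            · rw [Equiv.swap_apply_right]; exact GG_isolated (Or.inl rfl))
        · push_neg at ha hb
          rwa [Equiv.swap_apply_of_ne_of_ne ha.1 ha.2, Equiv.swap_apply_of_ne_of_ne hb.1 hb.2] at h
    · intro h
      by_cases ha : a = 0 ∨ a = 1
      · exact absurd (GG.adj_symm h) (GG_isolated ha)
      · by_cases hb : b = 0 ∨ b = 1
        · exact absurd h (GG_isolated hb)
        · push_neg at ha hb
          rwa [Equiv.swap_apply_of_ne_of_ne ha.1 ha.2, Equiv.swap_apply_of_ne_of_ne hb.1 hb.2]

lemma GG_not_symIndiv : ¬ SymIndivGraph GG := by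
  intro h
  obtain ⟨e, hsym, hmono⟩ := h cc
  obtain ⟨g', hg'⟩ := hsym swapAut
  have he0 : g' (e 0) = e 1 := by
    have := hg' 0
    rwa [show swapAut 0 = 1 from rfl] at this
  -- e 0 and e 1 are in different blocks
  have hne01 : e 0 ≠ e 1 := fun h => by
    have := e.injective h; omega
  have hBne : BB (e 0) ≠ BB (e 1) := by
    intro hB
    have : GG.Adj (e 0) (e 1) := ⟨hne01, hB⟩
    rw [e.map_adj_iff] at this
    exact GG_isolated (Or.inr rfl) this
  -- but g' gives a bijection between the two blocks
  have hblocks : ∀ u, BB u = BB (e 0) ↔ BB (g' u) = BB (e 1) := by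
    intro u
    by_cases hu : u = e 0
    · subst hu; rw [he0]
      exact iff_of_true rfl rfl
    · constructor
      · intro hB
        have : GG.Adj u (e 0) := ⟨hu, hB⟩
        have h2 : GG.Adj (g' u) (g' (e 0)) := g'.map_adj_iff.mpr this
        rw [he0] at h2
        exact h2.2
      · intro hB
        by_cases hgu : g' u = e 1
        · exact absurd (g'.injective (by rw [hgu, he0])) hu
        · have : GG.Adj (g' u) (e 1) := ⟨hgu, hB⟩
          rw [← he0] at this
          have h2 := g'.map_adj_iff.mp this
          exact h2.2
  -- block of e 0 and block of e 1 as finsets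
  have hcard : ∀ v : ℕ, (Finset.Ico (lo (BB v)) (lo (BB v) + LL (BB v))).card = LL (BB v) := by
    intro v; rw [Nat.card_Ico]; omega
  have hmemiff : ∀ v u : ℕ, u ∈ Finset.Ico (lo (BB v)) (lo (BB v) + LL (BB v)) ↔ BB u = BB v := by
    intro v u
    rw [Finset.mem_Ico, mem_block_iff]
  have hbij : (Finset.Ico (lo (BB (e 0))) (lo (BB (e 0)) + LL (BB (e 0)))).card
      = (Finset.Ico (lo (BB (e 1))) (lo (BB (e 1)) + LL (BB (e 1)))).card := by
    apply Finset.card_bij' (fun u _ => g' u) (fun u _ => g'.symm u)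
    · intro a ha
      rw [hmemiff] at ha ⊢
      exact (hblocks a).mp ha
    · intro a ha
      rw [hmemiff] at ha ⊢
      have := (hblocks (g'.symm a)).mpr (by rwa [RelIso.apply_symm_apply])
      exact this
    · intro a _; exact RelIso.symm_apply_apply g' a
    · intro a _; exact RelIso.apply_symm_apply g' a
  rw [hcard, hcard] at hbij
  exact LL_ne (hmono 0 1) hBne hbij

end SymIndivAux

/-- The ordered graph `(ℕ, G, ≤)` is symmetrically indivisible. -/
def SymIndivOrderedGraph (G : SimpleGraph ℕ) : Prop :=
  ∀ c : ℕ → Bool, ∃ e : ℕ → ℕ,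
    StrictMono e ∧
    (∀ x y, G.Adj (e x) (e y) ↔ G.Adj x y) ∧
    (∀ x y, c (e x) = c (e y)) ∧
    ∀ g : Set.range e ≃ Set.range e,
      (∀ x y : Set.range e, G.Adj (g x : ℕ) (g y : ℕ) ↔ G.Adj (x : ℕ) (y : ℕ)) →
      (∀ x y : Set.range e, (g x : ℕ) ≤ (g y : ℕ) ↔ (x : ℕ) ≤ (y : ℕ)) →
      ∃ g' : ℕ ≃ ℕ,
        (∀ x y, G.Adj (g' x) (g' y) ↔ G.Adj x y) ∧
        (∀ x y, g' x ≤ g' y ↔ x ≤ y) ∧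
        ∀ x : Set.range e, g' (x : ℕ) = (g x : ℕ)

namespace SymIndivAux

lemma GG_orderedSymIndiv : SymIndivOrderedGraph GG := by
  intro c
  -- Step A: one color admits arbitrarily large monochromatic sets inside blocks,
  -- in arbitrarily late blocks.
  have key : ∃ t : Bool, ∀ s N : ℕ, ∃ F : Finset ℕ, F.card = s ∧ (∀ x ∈ F, c x = t) ∧
      (∀ x ∈ F, ∀ y ∈ F, BB x = BB y) ∧ (∀ x ∈ F, N < BB x) := by
    by_contra hcon
    push_neg at hcon
    obtain ⟨s1, N1, h1⟩ := hcon true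
    obtain ⟨s0, N0, h0⟩ := hcon false
    set M := N1 + N0 + s1 + s0 + 1 with hM
    set I := Finset.Ico (lo (2*M)) (lo (2*M) + LL (2*M)) with hI
    have hIcard : I.card = M + 1 := by
      rw [hI, Nat.card_Ico]
      simp only [LL]
      omega
    have hIB : ∀ x ∈ I, BB x = 2*M := by
      intro x hx
      rw [hI, Finset.mem_Ico] at hx
      exact BB_eq_of_mem hx.1 hx.2
    have hsplit := Finset.card_filter_add_card_filter_not (s := I)
      (fun x => c x = true)
    by_cases hc1 : s1 ≤ (I.filter (fun x => c x = true)).card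
    · obtain ⟨F, hFsub, hFcard⟩ := Finset.exists_subset_card_eq hc1
      have hmem : ∀ x ∈ F, x ∈ I ∧ c x = true := by
        intro x hx
        have := hFsub hx
        rw [Finset.mem_filter] at this
        exact this
      obtain ⟨x, hxF, hxN⟩ := h1 F hFcard (fun x hx => (hmem x hx).2)
        (fun x hx y hy => by rw [hIB x (hmem x hx).1, hIB y (hmem y hy).1])
      rw [hIB x (hmem x hxF).1] at hxN
      omega
    · have hc0 : s0 ≤ (I.filter (fun x => ¬ c x = true)).card := by omega
      obtain ⟨F, hFsub, hFcard⟩ := Finset.exists_subset_card_eq hc0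
      have hmem : ∀ x ∈ F, x ∈ I ∧ c x = false := by
        intro x hx
        have := hFsub hx
        rw [Finset.mem_filter] at this
        exact ⟨this.1, by simpa using this.2⟩
      obtain ⟨x, hxF, hxN⟩ := h0 F hFcard (fun x hx => (hmem x hx).2)
        (fun x hx y hy => by rw [hIB x (hmem x hx).1, hIB y (hmem y hy).1])
      rw [hIB x (hmem x hxF).1] at hxN
      omega
  obtain ⟨t, H⟩ := key
  choose FF hFcard hFcol hFblk hFgt using H
  -- Step B: recursively choose target blocks
  let S : ℕ → Finset ℕ := fun k =>
    Nat.rec (FF (LL 0) 0) (fun k prev => FF (LL (k+1)) (BB (prev.sup id))) k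
  have hS0 : S 0 = FF (LL 0) 0 := rfl
  have hSs : ∀ k, S (k+1) = FF (LL (k+1)) (BB ((S k).sup id)) := fun _ => rfl
  have hcardS : ∀ k, (S k).card = LL k := by
    intro k
    cases k with
    | zero => rw [hS0]; exact hFcard _ _
    | succ k => rw [hSs]; exact hFcard _ _
  have hcolS : ∀ k, ∀ x ∈ S k, c x = t := by
    intro k
    cases k with
    | zero => rw [hS0]; exact hFcol _ _
    | succ k => rw [hSs]; exact hFcol _ _
  have hblkS : ∀ k, ∀ x ∈ S k, ∀ y ∈ S k, BB x = BB y := by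
    intro k
    cases k with
    | zero => rw [hS0]; exact hFblk _ _
    | succ k => rw [hSs]; exact hFblk _ _
  have hgtS : ∀ k, ∀ b ∈ S (k+1), BB ((S k).sup id) < BB b := by
    intro k b hb
    rw [hSs k] at hb
    exact hFgt _ _ b hb
  have hne : ∀ k, (S k).Nonempty := by
    intro k
    rw [← Finset.card_pos, hcardS k]
    exact LL_pos k
  choose w hw using hne
  set jj : ℕ → ℕ := fun k => BB (w k) with hjj
  have hBS : ∀ k, ∀ x ∈ S k, BB x = jj k := fun k x hx => hblkS k x hx (w k) (hw k)
  have hjj_mono : StrictMono jj := by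
    apply strictMono_nat_of_lt_succ
    intro k
    exact lt_of_le_of_lt (BB_monotone (Finset.le_sup (f := id) (hw k)))
      (hgtS k (w (k+1)) (hw (k+1)))
  have cross : ∀ k k' : ℕ, k < k' → ∀ a ∈ S k, ∀ b ∈ S k', a < b := by
    intro k k' hkk a ha b hb
    obtain ⟨k'', rfl⟩ : ∃ k'', k' = k'' + 1 := ⟨k' - 1, by omega⟩
    have h1 : BB a = jj k := hBS k a ha
    have h2 : jj k ≤ jj k'' := hjj_mono.monotone (by omega)
    have h3 : jj k'' ≤ BB ((S k'').sup id) := BB_monotone (Finset.le_sup (f := id) (hw k''))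
    have h4 : BB ((S k'').sup id) < BB b := hgtS k'' b hb
    exact BB_lt_of_lt (by omega)
  -- the embedding
  let f : ℕ → ℕ → ℕ := fun k i =>
    if h : i < LL k then (S k).orderEmbOfFin (hcardS k) ⟨i, h⟩ else 0
  let e : ℕ → ℕ := fun n => f (BB n) (n - lo (BB n))
  have hf_mem : ∀ k i (h : i < LL k), f k i ∈ S k := by
    intro k i h
    simp only [f, dif_pos h]
    exact Finset.orderEmbOfFin_mem _ _ _
  have hf_mono : ∀ k i j, i < j → j < LL k → f k i < f k j := by
    intro k i j hij hj
    simp only [f, dif_pos hj, dif_pos (lt_trans hij hj)]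
    exact ((S k).orderEmbOfFin (hcardS k)).strictMono (Fin.mk_lt_mk.mpr hij)
  have he_mem : ∀ n, e n ∈ S (BB n) := by
    intro n
    have := BB_mem n
    exact hf_mem _ _ (by omega)
  have hBe : ∀ n, BB (e n) = jj (BB n) := fun n => hBS _ _ (he_mem n)
  have he_sm : StrictMono e := by
    intro x y hxy
    rcases eq_or_ne (BB x) (BB y) with h | h
    · show f (BB x) (x - lo (BB x)) < f (BB y) (y - lo (BB y))
      have hx := BB_mem x
      have hy := BB_mem y
      rw [← h] at hy ⊢
      exact hf_mono _ _ _ (by omega) (by omega)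
    · have hBB : BB x < BB y := lt_of_le_of_ne (BB_monotone hxy.le) h
      exact cross _ _ hBB _ (he_mem x) _ (he_mem y)
  refine ⟨e, he_sm, ?_, ?_, ?_⟩
  · -- adjacency
    intro x y
    rw [GG_adj, GG_adj]
    constructor
    · rintro ⟨h1, h2⟩
      refine ⟨fun hxy => h1 (by rw [hxy]), ?_⟩
      rw [hBe, hBe] at h2
      exact hjj_mono.injective h2
    · rintro ⟨h1, h2⟩
      refine ⟨fun hxy => h1 (he_sm.injective hxy), ?_⟩
      rw [hBe, hBe, h2]
  · -- monochromatic
    intro x y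
    rw [hcolS _ _ (he_mem x), hcolS _ _ (he_mem y)]
  · -- symmetry: any order-and-graph automorphism of the range is the identity
    intro g hadj hord
    have claim : ∀ n : ℕ, ∀ x : Set.range e, (x : ℕ) = n → (g x : ℕ) = (x : ℕ) := by
      intro n
      induction n using Nat.strong_induction_on with
      | _ n ih =>
        intro x hx
        rcases lt_trichotomy ((g x : ℕ)) ((x : ℕ)) with hlt | heq | hgt
        · have h1 : (g (g x) : ℕ) = (g x : ℕ) := ih _ (by omega) (g x) rfl
          have h2 : g (g x) = g x := Subtype.ext h1
          have h3 : g x = x := g.injective h2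
          rw [h3]
        · exact heq
        · obtain ⟨y, hy⟩ := g.surjective x
          have hgy : (g y : ℕ) = (x : ℕ) := by rw [hy]
          have hyx : (y : ℕ) < (x : ℕ) := by
            by_contra hc
            have : (x : ℕ) ≤ (y : ℕ) := by omega
            have := (hord x y).mpr this
            omega
          have h1 : (g y : ℕ) = (y : ℕ) := ih _ (by omega) y rfl
          have h2 : y = x := Subtype.ext (by omega)
          have h3 : g x = x := h2 ▸ hy
          rw [h3]
    refine ⟨Equiv.refl ℕ, by simp, by simp, ?_⟩
    intro x
    exact (claim _ x rfl).symm

end SymIndivAux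

theorem exists_orderedSymIndiv_graph_reduct_not_symIndiv :
    ∃ G : SimpleGraph ℕ, SymIndivOrderedGraph G ∧ ¬ SymIndivGraph G := by
  exact ⟨SymIndivAux.GG, SymIndivAux.GG_orderedSymIndiv, SymIndivAux.GG_not_symIndiv⟩
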